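/- For any σ > 0, n ≥ 1, d ≥ 1, and δ ∈ (0, (2e)⁻¹), there exists a distribution on ℝ^d with mean μ and covariance matrix σ²I_d such that the sample mean X̄ of n i.i.d. observations from this distribution satisfies, with probability at least δ, ‖X̄ − μ‖_∞ ≥ σ·√(d/(nδ))·(1 − 2eδ/n)^{(n−1)/2}. -/

import Mathlib

open MeasureTheory
open scoped ENNReal Classical

section Stmt6Aux

variable {α : Type*} [MeasurableSpace α] [MeasurableSingletonClass α]

noncomputable def mixM (a c : ℝ) (x0 : α) {d : ℕ} (v w : Fin d → α) : Measure α :=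
  ENNReal.ofReal a • Measure.dirac x0
    + ∑ j : Fin d, ENNReal.ofReal c • (Measure.dirac (v j) + Measure.dirac (w j))

lemma integrable_dirac'' (f : α → ℝ) (a : α) : Integrable f (Measure.dirac a) :=
  (integrable_const (f a)).congr (ae_eq_dirac f).symm

lemma mixM_integral {d : ℕ} (a c : ℝ) (ha : 0 ≤ a) (hc : 0 ≤ c) (x0 : α)
    (v w : Fin d → α) (f : α → ℝ) :
    ∫ y, f y ∂(mixM a c x0 v w)
      = a * f x0 + ∑ j : Fin d, c * (f (v j) + f (w j)) := by
  have h1 : Integrable f (ENNReal.ofReal a • Measure.dirac x0) :=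
    (integrable_dirac'' f x0).smul_measure ENNReal.ofReal_ne_top
  have h2 : ∀ j : Fin d,
      Integrable f (ENNReal.ofReal c • (Measure.dirac (v j) + Measure.dirac (w j))) := fun j =>
    ((integrable_dirac'' f (v j)).add_measure (integrable_dirac'' f (w j))).smul_measure
      ENNReal.ofReal_ne_top
  rw [mixM, integral_add_measure h1 (integrable_finset_sum_measure.2 fun j _ => h2 j),
    integral_finset_sum_measure (fun j _ => h2 j), integral_smul_measure, integral_dirac]
  simp only [integral_smul_measure,
    integral_add_measure (integrable_dirac'' f _) (integrable_dirac'' f _), integral_dirac,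
    ENNReal.toReal_ofReal ha, ENNReal.toReal_ofReal hc, smul_eq_mul]

lemma mixM_apply {d : ℕ} (a c : ℝ) (x0 : α) (v w : Fin d → α) (y : α) :
    mixM a c x0 v w {y}
      = (if x0 = y then ENNReal.ofReal a else 0)
        + ∑ j : Fin d, ENNReal.ofReal c *
            ((if v j = y then 1 else 0) + (if w j = y then 1 else 0)) := by
  rw [mixM, Measure.add_apply, Measure.smul_apply, Measure.finset_sum_apply]
  simp only [Measure.smul_apply, Measure.add_apply, Measure.dirac_apply, Set.indicator_apply,
    Set.mem_singleton_iff, smul_eq_mul, Pi.one_apply, mul_ite, mul_one, mul_zero]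

lemma mixM_prob {d : ℕ} (a c : ℝ) (ha : 0 ≤ a) (hc : 0 ≤ c) (h : a + d * (2 * c) = 1)
    (x0 : α) (v w : Fin d → α) : IsProbabilityMeasure (mixM a c x0 v w) := by
  constructor
  rw [mixM, Measure.add_apply, Measure.smul_apply, Measure.finset_sum_apply]
  simp only [Measure.smul_apply, Measure.add_apply, measure_univ, smul_eq_mul, mul_one]
  rw [Finset.sum_const, Finset.card_univ, Fintype.card_fin, nsmul_eq_mul]
  have h2 : (d : ℝ≥0∞) * (ENNReal.ofReal c * (1 + 1)) = ENNReal.ofReal ((d : ℝ) * (2 * c)) := by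
    rw [ENNReal.ofReal_mul (by positivity), ENNReal.ofReal_mul (by norm_num : (0:ℝ) ≤ 2),
      ← ENNReal.ofReal_natCast d, ENNReal.ofReal_ofNat]
    ring
  rw [h2, ← ENNReal.ofReal_add ha (by positivity), h, ENNReal.ofReal_one]

end Stmt6Aux

theorem stmt6 (σ : ℝ) (hσ : 0 < σ) (n d : ℕ) (hn : 1 ≤ n) (hd : 1 ≤ d)
    (δ : ℝ) (hδ0 : 0 < δ) (hδ : δ < (2 * Real.exp 1)⁻¹) :
    ∃ (P : Measure (Fin d → ℝ)) (_ : IsProbabilityMeasure P) (mu : Fin d → ℝ),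
      (∀ k, ∫ v, v k ∂P = mu k) ∧
      (∀ k l, ∫ v, (v k - mu k) * (v l - mu l) ∂P = if k = l then σ ^ 2 else 0) ∧
      ENNReal.ofReal δ ≤
        (Measure.pi fun _ : Fin n => P)
          {x | σ * Real.sqrt (d / (n * δ)) *
                 (1 - 2 * Real.exp 1 * δ / n) ^ (((n : ℝ) - 1) / 2)
               ≤ ‖(n : ℝ)⁻¹ • (∑ i, x i) - mu‖} := by
  have he1 : (1 : ℝ) < Real.exp 1 := by
    have := Real.exp_lt_exp.mpr (show (0:ℝ) < 1 by norm_num)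
    simpa [Real.exp_zero] using this
  have hn1 : (1 : ℝ) ≤ (n : ℝ) := by exact_mod_cast hn
  have hnpos : (0 : ℝ) < n := lt_of_lt_of_le one_pos hn1
  have hd1 : (1 : ℝ) ≤ (d : ℝ) := by exact_mod_cast hd
  have hdpos : (0 : ℝ) < d := lt_of_lt_of_le one_pos hd1
  have h2e : (0 : ℝ) < 2 * Real.exp 1 := by positivity
  have h2eδ : 2 * Real.exp 1 * δ < 1 := by
    rw [inv_eq_one_div, lt_div_iff₀ h2e] at hδ
    linarith
  set b : ℝ := 1 - 2 * Real.exp 1 * δ / (n : ℝ) with hb_def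
  have hfrac_lt : 2 * Real.exp 1 * δ / (n : ℝ) < 1 / (n : ℝ) := by
    gcongr
  have hb0 : 0 < b := by
    have h1n : 1 / (n : ℝ) ≤ 1 := by
      rw [div_le_one hnpos]; exact hn1
    simp only [hb_def]; linarith
  have hb1 : b < 1 := by
    have : 0 < 2 * Real.exp 1 * δ / (n : ℝ) := by positivity
    simp only [hb_def]; linarith
  set m : ℝ := (n : ℝ) - 1 with hm_def
  have hm0 : 0 ≤ m := by simp only [hm_def]; linarith
  set bm : ℝ := b ^ m with hbm_def
  have hbm0 : 0 < bm := Real.rpow_pos_of_pos hb0 m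
  have hbm1 : bm ≤ 1 := Real.rpow_le_one hb0.le hb1.le hm0
  -- lower bound on bm
  have hbm_lb : (2 * Real.exp 1)⁻¹ ≤ bm := by
    rcases eq_or_lt_of_le hm0 with hm|hm
    · rw [hbm_def, ← hm, Real.rpow_zero]
      rw [inv_le_one_iff₀]; right; linarith
    · have hexp_b : Real.exp (-(1/m)) ≤ b := by
        have h1 : 1/m + 1 ≤ Real.exp (1/m) := by
          have := Real.add_one_le_exp (1/m); linarith
        have hpos : (0:ℝ) < 1/m + 1 := by positivity
        have h2 : Real.exp (-(1/m)) ≤ (1/m + 1)⁻¹ := by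
          rw [Real.exp_neg]
          exact inv_anti₀ hpos h1
        refine h2.trans ?_
        have hmn : m + 1 = (n : ℝ) := by simp [hm_def]
        have hinv : (1/m + 1)⁻¹ = m / (n : ℝ) := by
          rw [← hmn]; field_simp; ring
        rw [hinv, hb_def, hm_def, div_le_iff₀ hnpos, sub_mul, one_mul,
          div_mul_cancel₀ _ (ne_of_gt hnpos)]
        linarith
      have : Real.exp (-(1/m)) ^ m ≤ bm := by
        rw [hbm_def]
        exact Real.rpow_le_rpow (Real.exp_pos _).le hexp_b hm0
      refine le_trans ?_ this
      rw [← Real.exp_mul]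
      have : -(1/m) * m = -1 := by field_simp
      rw [this, Real.exp_neg]
      have h2e' : Real.exp 1 ≤ 2 * Real.exp 1 := by linarith
      exact inv_anti₀ (Real.exp_pos 1) h2e'
  set η : ℝ := σ * Real.sqrt ((d : ℝ) / ((n : ℝ) * δ)) * b ^ (m / 2) with hη_def
  have hdnδ : (0 : ℝ) < (d : ℝ) / ((n : ℝ) * δ) := by positivity
  have hη0 : 0 < η := by
    have := Real.sqrt_pos.mpr hdnδ
    have := Real.rpow_pos_of_pos hb0 (m / 2)
    positivity
  have hη2 : η ^ 2 = σ ^ 2 * ((d : ℝ) / ((n : ℝ) * δ)) * bm := by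
    have hpow : (b ^ (m/2)) ^ 2 = bm := by
      rw [hbm_def, ← Real.rpow_natCast (b ^ (m/2)) 2, ← Real.rpow_mul hb0.le]
      norm_num
    rw [hη_def, mul_pow, mul_pow, Real.sq_sqrt hdnδ.le, hpow]
  set p : ℝ := σ ^ 2 / (2 * (n : ℝ) ^ 2 * η ^ 2) with hp_def
  have hp0 : 0 < p := by positivity
  set q : ℝ := 2 * d * p with hq_def
  have hq0 : 0 < q := by positivity
  have hq : q = δ / ((n : ℝ) * bm) := by
    rw [hq_def, hp_def, hη2]
    field_simp
  have hq_le : q ≤ 2 * Real.exp 1 * δ / (n : ℝ) := by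
    rw [hq]
    have h1 : δ / ((n : ℝ) * bm) ≤ δ / ((n : ℝ) * (2 * Real.exp 1)⁻¹) := by
      gcongr
    refine h1.trans (le_of_eq ?_)
    rw [div_mul_eq_div_div, div_inv_eq_mul]
    ring
  have hq1 : q < 1 :=
    lt_of_lt_of_le (lt_of_le_of_lt hq_le hfrac_lt) (by rw [div_le_one hnpos]; exact hn1)
  have hbq : b ≤ 1 - q := by
    have : q ≤ 2 * Real.exp 1 * δ / (n : ℝ) := hq_le
    simp only [hb_def]; linarith
  have h1q0 : 0 < 1 - q := by linarith
  -- key real inequality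
  have hkey : δ ≤ (n : ℝ) * q * (1 - q) ^ (n - 1) := by
    have hcast : ((n - 1 : ℕ) : ℝ) = m := by
      rw [hm_def, Nat.cast_sub hn, Nat.cast_one]
    have hpow : ((1 - q) ^ (n - 1) : ℝ) = (1 - q) ^ m := by
      rw [← hcast, Real.rpow_natCast]
    rw [hpow]
    have hnq : (n : ℝ) * q = δ / bm := by
      rw [hq]; field_simp
    rw [hnq]
    have hmono : bm ≤ (1 - q) ^ m := by
      rw [hbm_def]
      exact Real.rpow_le_rpow hb0.le hbq hm0
    calc δ = δ / bm * bm := by field_simp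
    _ ≤ δ / bm * (1 - q) ^ m := by
        apply mul_le_mul_of_nonneg_left hmono (by positivity)
  -- the construction
  have hnη0 : (0:ℝ) < (n : ℝ) * η := by positivity
  set cs : Bool → ℝ := fun s => if s then (n : ℝ) * η else -((n : ℝ) * η) with hcs_def
  have hcs_ne : ∀ s, cs s ≠ 0 := by
    intro s; cases s <;> simp [hcs_def] <;>
      exact ⟨by positivity, ne_of_gt hη0⟩
  have hcs_abs : ∀ s, |cs s| = (n : ℝ) * η := by
    intro s; cases s <;> simp [hcs_def, abs_of_pos hnη0]
  have hcs_sq : ∀ s, cs s * cs s = ((n:ℝ) * η) ^ 2 := by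
    intro s; cases s <;> simp [hcs_def] <;> ring
  have hcs_inj : ∀ s s', cs s = cs s' → s = s' := by
    intro s s' h
    cases s <;> cases s' <;>
      first
        | rfl
        | (rw [hcs_def] at h; norm_num at h; linarith)
  set u : Fin d → Bool → (Fin d → ℝ) := fun j s => Pi.single j (cs s) with hu_def
  have hu_ne : ∀ j s, u j s ≠ 0 := by
    intro j s h
    have := congrFun h j
    simp only [hu_def, Pi.single_eq_same, Pi.zero_apply] at this
    exact hcs_ne s this
  have hu_inj : ∀ j j' s s', u j s = u j' s' → j = j' ∧ s = s' := by
    intro j j' s s' h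
    by_cases hjj : j = j'
    · subst hjj
      have := congrFun h j
      simp only [hu_def, Pi.single_eq_same] at this
      exact ⟨rfl, hcs_inj _ _ this⟩
    · have := congrFun h j
      simp only [hu_def, Pi.single_eq_same, Pi.single_eq_of_ne hjj] at this
      exact absurd this (hcs_ne s)
  set P := mixM (1 - q) p (0 : Fin d → ℝ) (fun j => u j true) (fun j => u j false) with hP_def
  clear_value b m bm η p q cs u P
  have hcs_add : cs true + cs false = 0 := by rw [hcs_def]; norm_num
  have h1q0' : (0:ℝ) ≤ 1 - q := h1q0.le
  have hPprob : IsProbabilityMeasure P := by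
    rw [hP_def]
    exact mixM_prob _ _ h1q0' hp0.le (by rw [hq_def]; ring) _ _ _
  refine ⟨P, hPprob, 0, ?_, ?_, ?_⟩
  · -- mean
    intro k
    rw [hP_def, mixM_integral _ _ h1q0' hp0.le]
    have hz : ∀ j : Fin d, p * ((u j true) k + (u j false) k) = 0 := by
      intro j
      simp only [hu_def, Pi.single_apply]
      split_ifs with h
      · rw [hcs_add, mul_zero]
      · simp
    simp [hz]
  · -- covariance
    intro k l
    simp only [Pi.zero_apply, sub_zero]
    rw [hP_def, mixM_integral _ _ h1q0' hp0.le]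
    by_cases hkl : k = l
    · subst hkl
      rw [if_pos rfl, Finset.sum_eq_single k]
      · simp only [hu_def, Pi.single_eq_same, Pi.zero_apply, hcs_sq]
        rw [hp_def]
        field_simp
        ring
      · intro j _ hjk
        simp only [hu_def, Pi.single_eq_of_ne (Ne.symm hjk)]
        ring
      · simp
    · rw [if_neg hkl]
      have hz : ∀ j : Fin d,
          p * ((u j true) k * (u j true) l + (u j false) k * (u j false) l) = 0 := by
        intro j
        simp only [hu_def, Pi.single_apply]
        split_ifs with h1 h2 <;> first
          | exact absurd (h1.trans h2.symm) hkl
          | ring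
      simp [hz]
  · -- probability bound
    haveI := hPprob
    -- singleton measures
    have hP0 : P {(0 : Fin d → ℝ)} = ENNReal.ofReal (1 - q) := by
      rw [hP_def, mixM_apply, if_pos rfl, Finset.sum_eq_zero, add_zero]
      intro j _
      rw [if_neg (hu_ne j true), if_neg (hu_ne j false)]
      simp
    have hPu : ∀ (j : Fin d) (s : Bool), P {u j s} = ENNReal.ofReal p := by
      intro j s
      have h0u : (0 : Fin d → ℝ) ≠ u j s := fun h => hu_ne j s h.symm
      rw [hP_def, mixM_apply, if_neg h0u, zero_add, Finset.sum_eq_single j]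
      · have hne : ∀ s' : Bool, s' ≠ s → u j s' ≠ u j s :=
          fun s' hss h => hss (hu_inj j j s' s h).2
        cases s
        · rw [if_neg (hne true (by simp)), if_pos rfl]
          simp
        · rw [if_pos rfl, if_neg (hne false (by simp))]
          simp
      · intro j' _ hj'
        have h1 : ∀ s' : Bool, u j' s' ≠ u j s := fun s' h => hj' (hu_inj _ _ _ _ h).1
        rw [if_neg (h1 true), if_neg (h1 false)]
        simp
      · simp
    -- cylinder sets
    set C : (Fin n × Fin d × Bool) → Set (Fin n → Fin d → ℝ) := fun t =>
      Set.pi Set.univ (fun i => if i = t.1 then {u t.2.1 t.2.2} else {(0 : Fin d → ℝ)})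
      with hC_def
    have hCmeas : ∀ t, MeasurableSet (C t) := by
      intro t
      rw [hC_def]
      apply MeasurableSet.pi Set.countable_univ
      intro i _
      split_ifs <;> exact measurableSet_singleton _
    have hCsub : ∀ t, C t ⊆
        {x : Fin n → Fin d → ℝ | η ≤ ‖(n : ℝ)⁻¹ • (∑ i, x i) - (0 : Fin d → ℝ)‖} := by
      intro t x hx
      rw [hC_def, Set.mem_univ_pi] at hx
      have hx1 : x t.1 = u t.2.1 t.2.2 := by
        have := hx t.1; rwa [if_pos rfl, Set.mem_singleton_iff] at this
      have hx2 : ∀ i, i ≠ t.1 → x i = 0 := by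
        intro i hi
        have := hx i; rwa [if_neg hi, Set.mem_singleton_iff] at this
      have hsum : ∑ i, x i = u t.2.1 t.2.2 := by
        rw [Finset.sum_eq_single t.1 (fun i _ hi => hx2 i hi) (by simp), hx1]
      show η ≤ ‖(n : ℝ)⁻¹ • (∑ i, x i) - (0 : Fin d → ℝ)‖
      rw [hsum, sub_zero, norm_smul]
      have hnorm : ‖u t.2.1 t.2.2‖ = (n : ℝ) * η := by
        rw [hu_def]
        rw [Pi.norm_single, Real.norm_eq_abs, hcs_abs]
      rw [hnorm, Real.norm_eq_abs, abs_of_pos (inv_pos.mpr hnpos)]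
      rw [inv_mul_cancel_left₀ (ne_of_gt hnpos)]
    have hCdisj : Pairwise (Function.onFun Disjoint C) := by
      intro t t' htt'
      rw [Function.onFun, Set.disjoint_left]
      intro x hx hx'
      rw [hC_def, Set.mem_univ_pi] at hx hx'
      by_cases h1 : t.1 = t'.1
      · have e1 := hx t.1
        rw [if_pos rfl, Set.mem_singleton_iff] at e1
        have e2 := hx' t'.1
        rw [if_pos rfl, Set.mem_singleton_iff] at e2
        rw [← h1] at e2
        have heq : u t.2.1 t.2.2 = u t'.2.1 t'.2.2 := by rw [← e1, ← e2]
        obtain ⟨hj, hs⟩ := hu_inj _ _ _ _ heq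
        exact htt' (Prod.ext h1 (Prod.ext hj hs))
      · have e1 := hx t'.1
        rw [if_neg (fun h => h1 h.symm), Set.mem_singleton_iff] at e1
        have e2 := hx' t'.1
        rw [if_pos rfl, Set.mem_singleton_iff] at e2
        exact hu_ne t'.2.1 t'.2.2 (by rw [← e2, e1])
    have hCval : ∀ t, (Measure.pi fun _ : Fin n => P) (C t)
        = ENNReal.ofReal p * ENNReal.ofReal (1 - q) ^ (n - 1) := by
      intro t
      rw [hC_def, Measure.pi_pi]
      have hfac : ∀ i : Fin n,
          P (if i = t.1 then {u t.2.1 t.2.2} else {(0 : Fin d → ℝ)})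
            = if i = t.1 then ENNReal.ofReal p else ENNReal.ofReal (1 - q) := by
        intro i
        split_ifs
        · exact hPu t.2.1 t.2.2
        · exact hP0
      simp only [hfac]
      rw [← Finset.mul_prod_erase Finset.univ _ (Finset.mem_univ t.1), if_pos rfl]
      congr 1
      rw [Finset.prod_congr rfl (fun i hi => if_neg (Finset.ne_of_mem_erase hi)),
        Finset.prod_const, Finset.card_erase_of_mem (Finset.mem_univ _),
        Finset.card_univ, Fintype.card_fin]
    -- final bound
    have hfinal : ENNReal.ofReal δ
        ≤ ∑' t : Fin n × Fin d × Bool, (Measure.pi fun _ : Fin n => P) (C t) := by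
      rw [tsum_fintype]
      simp only [hCval]
      rw [Finset.sum_const, Finset.card_univ]
      have hcard : Fintype.card (Fin n × Fin d × Bool) = n * (d * 2) := by simp
      rw [hcard, nsmul_eq_mul]
      have hrw : (↑(n * (d * 2)) : ℝ≥0∞) * (ENNReal.ofReal p * ENNReal.ofReal (1 - q) ^ (n - 1))
          = ENNReal.ofReal ((n * (d * 2) : ℕ) * (p * (1 - q) ^ (n - 1))) := by
        rw [ENNReal.ofReal_mul (by positivity), ENNReal.ofReal_mul hp0.le,
          ENNReal.ofReal_pow h1q0', ENNReal.ofReal_natCast]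
      rw [hrw]
      apply ENNReal.ofReal_le_ofReal
      refine hkey.trans (le_of_eq ?_)
      push_cast
      rw [hq_def]
      ring
    refine hfinal.trans ?_
    rw [← measure_iUnion hCdisj hCmeas]
    exact measure_mono (Set.iUnion_subset hCsub)
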